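/- Let f be a C¹ self-map of [-1,1], strictly increasing on [-1,0], strictly decreasing on [0,1], with f(0) = 1, f(−1) = f(1) = −1, having power law |x|^γ at the critical point 0 for some γ > 1, and let f̃ = h_γ ∘ f ∘ h_γ^{−1}. Then the sequence of nested partitions determined by f decreases exponentially if and only if the sequence of nested partitions determined by f̃ decreases exponentially. -/

import Mathlib

open Set MeasureTheory Filter Topology

noncomputable def len (s : Set ℝ) : ℝ := (volume s).toReal

noncomputable def branch (f : ℝ → ℝ) : Bool → ℝ → ℝ
  | false => Function.invFunOn f (Icc (-1) 0)
  | true => Function.invFunOn f (Icc 0 1)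

noncomputable def gw (f : ℝ → ℝ) : List Bool → ℝ → ℝ
  | [] => id
  | b :: w => branch f b ∘ gw f w

noncomputable def Iw (f : ℝ → ℝ) (w : List Bool) : Set ℝ := gw f w '' Icc (-1) 1

def word (a : ℕ → Bool) (n : ℕ) : List Bool := ((List.range (n + 1)).reverse).map a

noncomputable def ratio (f : ℝ → ℝ) (a : ℕ → Bool) (n : ℕ) : ℝ :=
  len (Iw f (word a n)) / len (Iw f ((word a n).dropLast))

def IsScalingFun (f : ℝ → ℝ) (s : (ℕ → Bool) → ℝ) : Prop :=
  ∀ a : ℕ → Bool, Tendsto (ratio f a) atTop (nhds (s a))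

def HolderOnDual (s : (ℕ → Bool) → ℝ) : Prop :=
  ∃ C > (0:ℝ), ∃ lam ∈ Ioo (0:ℝ) 1, ∀ a b : ℕ → Bool, ∀ n : ℕ,
    (∀ k < n, a k = b k) → |s a - s b| ≤ C * lam ^ n

def EvZero (a : ℕ → Bool) : Prop := ∃ N, ∀ n ≥ N, a n = false

def Lambda (f : ℝ → ℝ) : Set ℝ := {x | ∀ n : ℕ, f^[n] x ∈ Icc (-1) 1}

structure GoodFamily where
  eps0 : ℝ
  eps0_pos : 0 < eps0
  f : ℝ → ℝ → ℝ
  f' : ℝ → ℝ → ℝ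
  gamma : ℝ
  one_lt_gamma : 1 < gamma
  mono : ∀ ε ∈ Icc 0 eps0, StrictMonoOn (f ε) (Icc (-1) 0)
  anti : ∀ ε ∈ Icc 0 eps0, StrictAntiOn (f ε) (Icc 0 1)
  map_neg_one : ∀ ε ∈ Icc 0 eps0, f ε (-1) = -1
  map_one : ∀ ε ∈ Icc 0 eps0, f ε 1 = -1
  map_zero : ∀ ε ∈ Icc 0 eps0, f ε 0 = 1 + ε
  smooth : ContDiffOn ℝ 1 (fun p : ℝ × ℝ => f p.1 p.2) (Icc 0 eps0 ×ˢ Icc (-1) 1)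
  deriv_f : ∀ ε ∈ Icc 0 eps0, ∀ x ∈ Icc (-1:ℝ) 1,
    HasDerivWithinAt (f ε) (f' ε x) (Icc (-1) 1) x
  Rneg : ℝ → ℝ → ℝ
  Rpos : ℝ → ℝ → ℝ
  Rneg_cont : ContinuousOn (fun p : ℝ × ℝ => Rneg p.1 p.2) (Icc 0 eps0 ×ˢ Icc (-1) 0)
  Rpos_cont : ContinuousOn (fun p : ℝ × ℝ => Rpos p.1 p.2) (Icc 0 eps0 ×ˢ Icc 0 1)
  Rneg_ne : ∀ ε ∈ Icc 0 eps0, ∀ x ∈ Icc (-1:ℝ) 0, Rneg ε x ≠ 0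
  Rpos_ne : ∀ ε ∈ Icc 0 eps0, ∀ x ∈ Icc (0:ℝ) 1, Rpos ε x ≠ 0
  Rneg_eq : ∀ ε ∈ Icc 0 eps0, ∀ x ∈ Ico (-1:ℝ) 0, Rneg ε x = f' ε x / |x| ^ (gamma - 1)
  Rpos_eq : ∀ ε ∈ Icc 0 eps0, ∀ x ∈ Ioc (0:ℝ) 1, Rpos ε x = f' ε x / |x| ^ (gamma - 1)
  K' : ℝ
  K'_pos : 0 < K'
  alpha' : ℝ
  alpha'_mem : alpha' ∈ Ioc (0:ℝ) 1
  holder' : ∀ ε ∈ Icc 0 eps0, ∀ x ∈ Icc (-1:ℝ) 1, ∀ y ∈ Icc (-1:ℝ) 1,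
    |f' ε x - f' ε y| ≤ K' * |x - y| ^ alpha'
  K'' : ℝ
  K''_pos : 0 < K''
  alpha'' : ℝ
  alpha''_mem : alpha'' ∈ Ioc (0:ℝ) 1
  holder''_neg : ∀ ε ∈ Icc 0 eps0, ∀ x ∈ Ico (-1:ℝ) 0, ∀ y ∈ Ico (-1:ℝ) 0,
    |f' ε x / |x| ^ (gamma - 1) - f' ε y / |y| ^ (gamma - 1)| ≤ K'' * |x - y| ^ alpha''
  holder''_pos : ∀ ε ∈ Icc 0 eps0, ∀ x ∈ Ioc (0:ℝ) 1, ∀ y ∈ Ioc (0:ℝ) 1,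
    |f' ε x / |x| ^ (gamma - 1) - f' ε y / |y| ^ (gamma - 1)| ≤ K'' * |x - y| ^ alpha''
  C0 : ℝ
  C0_pos : 0 < C0
  lam : ℝ
  lam_mem : lam ∈ Ioo (0:ℝ) 1
  decay : ∀ ε ∈ Icc 0 eps0, ∀ n : ℕ, 1 ≤ n → ∀ w : List Bool, w.length = n + 1 →
    len (Iw (f ε) w) ≤ C0 * lam ^ n

/-- The change of coordinate `h_γ` associated to the singular metric
`dy = dx/(1-x²)^{(γ-1)/γ}` on `[-1,1]`. -/
noncomputable def hgam (γ : ℝ) (x : ℝ) : ℝ :=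
  -1 + (2 / ∫ t in (-1:ℝ)..1, ((1 - t ^ 2) ^ ((γ - 1) / γ))⁻¹) *
    ∫ t in (-1:ℝ)..x, ((1 - t ^ 2) ^ ((γ - 1) / γ))⁻¹

/-- The inverse of `h_γ` on `[-1,1]`. -/
noncomputable def hgamInv (γ : ℝ) : ℝ → ℝ := Function.invFunOn (hgam γ) (Icc (-1) 1)

/-- `f̃ = h_γ ∘ f ∘ h_γ⁻¹`. -/
noncomputable def tildeF (γ : ℝ) (f : ℝ → ℝ) : ℝ → ℝ := hgam γ ∘ f ∘ hgamInv γ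

namespace PF

/-! ### Generic facts about the inverse branches of a unimodal map -/

/-- Standard shape hypotheses for a unimodal map of `[-1,1]`. -/
structure Std (F : ℝ → ℝ) : Prop where
  mono : StrictMonoOn F (Icc (-1) 0)
  anti : StrictAntiOn F (Icc 0 1)
  surj0 : ∀ y ∈ Icc (-1:ℝ) 1, ∃ x ∈ Icc (-1:ℝ) 0, F x = y
  surj1 : ∀ y ∈ Icc (-1:ℝ) 1, ∃ x ∈ Icc (0:ℝ) 1, F x = y

variable {F : ℝ → ℝ}

lemma Std.b0_mem (hF : Std F) {y : ℝ} (hy : y ∈ Icc (-1:ℝ) 1) :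
    branch F false y ∈ Icc (-1:ℝ) 0 :=
  Function.invFunOn_mem (hF.surj0 y hy)

lemma Std.b0_eq (hF : Std F) {y : ℝ} (hy : y ∈ Icc (-1:ℝ) 1) :
    F (branch F false y) = y :=
  Function.invFunOn_eq (hF.surj0 y hy)

lemma Std.b0_unique (hF : Std F) {x y : ℝ} (hx : x ∈ Icc (-1:ℝ) 0) (hxy : F x = y) :
    branch F false y = x := by
  have h1 : branch F false y ∈ Icc (-1:ℝ) 0 := Function.invFunOn_mem ⟨x, hx, hxy⟩
  have h2 : F (branch F false y) = y := Function.invFunOn_eq ⟨x, hx, hxy⟩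
  exact hF.mono.injOn h1 hx (h2.trans hxy.symm)

lemma Std.b1_mem (hF : Std F) {y : ℝ} (hy : y ∈ Icc (-1:ℝ) 1) :
    branch F true y ∈ Icc (0:ℝ) 1 :=
  Function.invFunOn_mem (hF.surj1 y hy)

lemma Std.b1_eq (hF : Std F) {y : ℝ} (hy : y ∈ Icc (-1:ℝ) 1) :
    F (branch F true y) = y :=
  Function.invFunOn_eq (hF.surj1 y hy)

lemma Std.b1_unique (hF : Std F) {x y : ℝ} (hx : x ∈ Icc (0:ℝ) 1) (hxy : F x = y) :
    branch F true y = x := by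
  have h1 : branch F true y ∈ Icc (0:ℝ) 1 := Function.invFunOn_mem ⟨x, hx, hxy⟩
  have h2 : F (branch F true y) = y := Function.invFunOn_eq ⟨x, hx, hxy⟩
  exact hF.anti.injOn h1 hx (h2.trans hxy.symm)

lemma Std.b0_mono (hF : Std F) {y₁ y₂ : ℝ} (h1 : y₁ ∈ Icc (-1:ℝ) 1) (h2 : y₂ ∈ Icc (-1:ℝ) 1)
    (h : y₁ ≤ y₂) : branch F false y₁ ≤ branch F false y₂ := by
  by_contra hc
  push_neg at hc
  have := hF.mono (hF.b0_mem h2) (hF.b0_mem h1) hc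
  rw [hF.b0_eq h2, hF.b0_eq h1] at this
  exact absurd this (not_lt.2 h)

lemma Std.b1_anti (hF : Std F) {y₁ y₂ : ℝ} (h1 : y₁ ∈ Icc (-1:ℝ) 1) (h2 : y₂ ∈ Icc (-1:ℝ) 1)
    (h : y₁ ≤ y₂) : branch F true y₂ ≤ branch F true y₁ := by
  by_contra hc
  push_neg at hc
  have := hF.anti (hF.b1_mem h1) (hF.b1_mem h2) hc
  rw [hF.b1_eq h1, hF.b1_eq h2] at this
  exact absurd this (not_lt.2 h)

lemma Std.b0_image (hF : Std F) {a b : ℝ} (ha : -1 ≤ a) (hab : a ≤ b) (hb : b ≤ 1) :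
    branch F false '' Icc a b = Icc (branch F false a) (branch F false b) := by
  have haI : a ∈ Icc (-1:ℝ) 1 := ⟨ha, hab.trans hb⟩
  have hbI : b ∈ Icc (-1:ℝ) 1 := ⟨ha.trans hab, hb⟩
  apply Set.Subset.antisymm
  · rintro z ⟨y, hy, rfl⟩
    have hyI : y ∈ Icc (-1:ℝ) 1 := ⟨ha.trans hy.1, hy.2.trans hb⟩
    exact ⟨hF.b0_mono haI hyI hy.1, hF.b0_mono hyI hbI hy.2⟩
  · intro z hz
    have hzI : z ∈ Icc (-1:ℝ) 0 := ⟨(hF.b0_mem haI).1.trans hz.1, hz.2.trans (hF.b0_mem hbI).2⟩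
    have h1 : a ≤ F z := by
      have := hF.mono.monotoneOn (hF.b0_mem haI) hzI hz.1
      rwa [hF.b0_eq haI] at this
    have h2 : F z ≤ b := by
      have := hF.mono.monotoneOn hzI (hF.b0_mem hbI) hz.2
      rwa [hF.b0_eq hbI] at this
    exact ⟨F z, ⟨h1, h2⟩, hF.b0_unique hzI rfl⟩

lemma Std.b1_image (hF : Std F) {a b : ℝ} (ha : -1 ≤ a) (hab : a ≤ b) (hb : b ≤ 1) :
    branch F true '' Icc a b = Icc (branch F true b) (branch F true a) := by
  have haI : a ∈ Icc (-1:ℝ) 1 := ⟨ha, hab.trans hb⟩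
  have hbI : b ∈ Icc (-1:ℝ) 1 := ⟨ha.trans hab, hb⟩
  apply Set.Subset.antisymm
  · rintro z ⟨y, hy, rfl⟩
    have hyI : y ∈ Icc (-1:ℝ) 1 := ⟨ha.trans hy.1, hy.2.trans hb⟩
    exact ⟨hF.b1_anti hyI hbI hy.2, hF.b1_anti haI hyI hy.1⟩
  · intro z hz
    have hzI : z ∈ Icc (0:ℝ) 1 := ⟨(hF.b1_mem hbI).1.trans hz.1, hz.2.trans (hF.b1_mem haI).2⟩
    have h1 : a ≤ F z := by
      have := hF.anti.antitoneOn hzI (hF.b1_mem haI) hz.2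
      rwa [hF.b1_eq haI] at this
    have h2 : F z ≤ b := by
      have := hF.anti.antitoneOn (hF.b1_mem hbI) hzI hz.1
      rwa [hF.b1_eq hbI] at this
    exact ⟨F z, ⟨h1, h2⟩, hF.b1_unique hzI rfl⟩

lemma Iw_cons (F : ℝ → ℝ) (i : Bool) (w : List Bool) :
    Iw F (i :: w) = branch F i '' Iw F w := by
  simp only [Iw, gw, Function.comp]
  exact (Set.image_image _ _ _).symm

lemma Std.Iw_eq_Icc (hF : Std F) (w : List Bool) :
    ∃ a b : ℝ, -1 ≤ a ∧ a ≤ b ∧ b ≤ 1 ∧ Iw F w = Icc a b := by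
  induction w with
  | nil =>
    exact ⟨-1, 1, le_refl _, by norm_num, le_refl _, by simp [Iw, gw]⟩
  | cons i w ih =>
    obtain ⟨a, b, ha, hab, hb, hI⟩ := ih
    have haI : a ∈ Icc (-1:ℝ) 1 := ⟨ha, hab.trans hb⟩
    have hbI : b ∈ Icc (-1:ℝ) 1 := ⟨ha.trans hab, hb⟩
    have hIm : Iw F (i :: w) = branch F i '' Icc a b := by rw [Iw_cons, hI]
    cases i with
    | false =>
      refine ⟨branch F false a, branch F false b, (hF.b0_mem haI).1,
        hF.b0_mono haI hbI hab, (hF.b0_mem hbI).2.trans (by norm_num), ?_⟩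
      rw [hIm, hF.b0_image ha hab hb]
    | true =>
      refine ⟨branch F true b, branch F true a, (hF.b1_mem hbI).1.trans' (by norm_num) |>.trans' (le_refl _), ?_, ?_, ?_⟩
      · exact hF.b1_anti haI hbI hab
      · exact (hF.b1_mem haI).2
      · rw [hIm, hF.b1_image ha hab hb]

/-! ### The coordinate change `hgam` -/

noncomputable def phiF (γ t : ℝ) : ℝ := ((1 - t ^ 2) ^ ((γ - 1) / γ))⁻¹

noncomputable def psiF (γ t : ℝ) : ℝ :=
  (1 - t) ^ (-((γ - 1) / γ)) + (1 + t) ^ (-((γ - 1) / γ))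

lemma hgam_eq (γ x : ℝ) : hgam γ x =
    -1 + (2 / ∫ t in (-1:ℝ)..1, phiF γ t) * ∫ t in (-1:ℝ)..x, phiF γ t := rfl

variable {γ : ℝ}

lemma gamma_pos (hγ : 1 < γ) : (0:ℝ) < γ := by linarith

lemma p_pos (hγ : 1 < γ) : 0 < (γ - 1) / γ := div_pos (by linarith) (by linarith)

lemma p_lt_one (hγ : 1 < γ) : (γ - 1) / γ < 1 := by
  rw [div_lt_one (by linarith)]; linarith

lemma q_eq (hγ : 1 < γ) : -((γ - 1) / γ) + 1 = 1 / γ := by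
  field_simp
  ring

lemma q_pos (hγ : 1 < γ) : 0 < 1 / γ := by positivity

lemma q_le_one (hγ : 1 < γ) : 1 / γ ≤ 1 := by
  rw [div_le_one (by linarith)]; linarith

lemma phi_nonneg (γ : ℝ) {t : ℝ} (ht : t ∈ Icc (-1:ℝ) 1) : 0 ≤ phiF γ t := by
  have h : (0:ℝ) ≤ 1 - t ^ 2 := by nlinarith [ht.1, ht.2]
  exact inv_nonneg.2 (Real.rpow_nonneg h _)

lemma phi_one_le (hγ : 1 < γ) {t : ℝ} (ht : t ∈ Ioo (-1:ℝ) 1) : 1 ≤ phiF γ t := by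
  have hb : 0 < 1 - t ^ 2 := by nlinarith [ht.1, ht.2]
  have hb1 : 1 - t ^ 2 ≤ 1 := by nlinarith
  have h1 : (1 - t ^ 2) ^ ((γ - 1) / γ) ≤ 1 :=
    Real.rpow_le_one hb.le hb1 (p_pos hγ).le
  have h2 : 0 < (1 - t ^ 2) ^ ((γ - 1) / γ) := Real.rpow_pos_of_pos hb _
  exact one_le_inv_iff₀.2 ⟨h2, h1⟩

lemma psi_nonneg (γ : ℝ) {t : ℝ} (ht : t ∈ Icc (-1:ℝ) 1) : 0 ≤ psiF γ t :=
  add_nonneg (Real.rpow_nonneg (by linarith [ht.2]) _) (Real.rpow_nonneg (by linarith [ht.1]) _)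

lemma phi_le_psi (hγ : 1 < γ) {t : ℝ} (ht : t ∈ Icc (-1:ℝ) 1) : phiF γ t ≤ psiF γ t := by
  have hp := p_pos hγ
  rcases eq_or_lt_of_le ht.2 with h1 | h1
  · have hz : (1 : ℝ) - t ^ 2 = 0 := by rw [h1]; ring
    have : phiF γ t = 0 := by
      simp [phiF, hz, Real.zero_rpow (ne_of_gt hp)]
    rw [this]; exact psi_nonneg γ ht
  rcases eq_or_lt_of_le ht.1 with h2 | h2
  · have hz : (1 : ℝ) - t ^ 2 = 0 := by rw [← h2]; ring
    have : phiF γ t = 0 := by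
      simp [phiF, hz, Real.zero_rpow (ne_of_gt hp)]
    rw [this]; exact psi_nonneg γ ht
  have hb : 0 < 1 - t ^ 2 := by nlinarith
  rcases le_total t 0 with h0 | h0
  · have hpos : (0:ℝ) < 1 + t := by linarith
    have key : (1 + t) ^ ((γ - 1) / γ) ≤ (1 - t ^ 2) ^ ((γ - 1) / γ) :=
      Real.rpow_le_rpow hpos.le (by nlinarith) hp.le
    have h3 : phiF γ t ≤ ((1 + t) ^ ((γ - 1) / γ))⁻¹ :=
      inv_anti₀ (Real.rpow_pos_of_pos hpos _) key
    have h4 : ((1 + t) ^ ((γ - 1) / γ))⁻¹ = (1 + t) ^ (-((γ - 1) / γ)) :=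
      (Real.rpow_neg hpos.le _).symm
    calc phiF γ t ≤ (1 + t) ^ (-((γ - 1) / γ)) := h4 ▸ h3
      _ ≤ psiF γ t := le_add_of_nonneg_left (Real.rpow_nonneg (by linarith) _)
  · have hpos : (0:ℝ) < 1 - t := by linarith
    have key : (1 - t) ^ ((γ - 1) / γ) ≤ (1 - t ^ 2) ^ ((γ - 1) / γ) :=
      Real.rpow_le_rpow hpos.le (by nlinarith) hp.le
    have h3 : phiF γ t ≤ ((1 - t) ^ ((γ - 1) / γ))⁻¹ :=
      inv_anti₀ (Real.rpow_pos_of_pos hpos _) key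
    have h4 : ((1 - t) ^ ((γ - 1) / γ))⁻¹ = (1 - t) ^ (-((γ - 1) / γ)) :=
      (Real.rpow_neg hpos.le _).symm
    calc phiF γ t ≤ (1 - t) ^ (-((γ - 1) / γ)) := h4 ▸ h3
      _ ≤ psiF γ t := le_add_of_nonneg_right (Real.rpow_nonneg (by linarith) _)

lemma phi_meas (γ : ℝ) : Measurable (phiF γ) := by
  unfold phiF
  fun_prop

lemma neg_p_gt (hγ : 1 < γ) : (-1:ℝ) < -((γ - 1) / γ) := by
  have := p_lt_one hγ; linarith

lemma psi_intble1 (hγ : 1 < γ) (a b : ℝ) :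
    IntervalIntegrable (fun t : ℝ => (1 - t) ^ (-((γ - 1) / γ))) volume a b := by
  have h := (intervalIntegral.intervalIntegrable_rpow' (a := 1 - a) (b := 1 - b)
    (neg_p_gt hγ)).comp_sub_left 1
  simpa using h

lemma psi_intble2 (hγ : 1 < γ) (a b : ℝ) :
    IntervalIntegrable (fun t : ℝ => (1 + t) ^ (-((γ - 1) / γ))) volume a b := by
  have h := (intervalIntegral.intervalIntegrable_rpow' (a := 1 + a) (b := 1 + b)
    (neg_p_gt hγ)).comp_add_left 1
  simpa using h

lemma psi_intble (hγ : 1 < γ) (a b : ℝ) : IntervalIntegrable (psiF γ) volume a b :=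
  (psi_intble1 hγ a b).add (psi_intble2 hγ a b)

lemma phi_intble (hγ : 1 < γ) {a b : ℝ} (ha : a ∈ Icc (-1:ℝ) 1) (hb : b ∈ Icc (-1:ℝ) 1) :
    IntervalIntegrable (phiF γ) volume a b := by
  apply (psi_intble hγ a b).mono_fun' ((phi_meas γ).aestronglyMeasurable.restrict)
  refine (MeasureTheory.ae_restrict_iff' measurableSet_uIoc).2 (Filter.Eventually.of_forall ?_)
  intro t ht
  have htI : t ∈ Icc (-1:ℝ) 1 := by
    rcases ht with ⟨h1, h2⟩
    constructor
    · have : min a b ≤ t := h1.le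
      exact le_trans (le_min ha.1 hb.1) this
    · exact h2.trans (max_le ha.2 hb.2)
  have h0 : 0 ≤ phiF γ t := phi_nonneg γ htI
  show ‖phiF γ t‖ ≤ psiF γ t
  rw [Real.norm_eq_abs, abs_of_nonneg h0]
  exact phi_le_psi hγ htI

lemma pair_null : volume ({-1, 1} : Set ℝ) = 0 :=
  (Set.Countable.insert _ (Set.countable_singleton _)).measure_zero _

lemma ae_phi_ge {x y : ℝ} (hγ : 1 < γ) (hx : -1 ≤ x) (hy : y ≤ 1) :
    ∀ᵐ t ∂(volume.restrict (Icc x y)), 1 ≤ phiF γ t := by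
  have h1 : ∀ᵐ t ∂(volume.restrict (Icc x y)), t ∉ ({-1, 1} : Set ℝ) :=
    ae_restrict_of_ae (measure_eq_zero_iff_ae_notMem.1 pair_null)
  have h2 : ∀ᵐ t ∂(volume.restrict (Icc x y)), t ∈ Icc x y :=
    ae_restrict_mem measurableSet_Icc
  filter_upwards [h1, h2] with t hmem hIcc
  have ht1 : t ≠ -1 := fun h => hmem (by simp [h])
  have ht2 : t ≠ 1 := fun h => hmem (by simp [h])
  have : t ∈ Ioo (-1:ℝ) 1 :=
    ⟨lt_of_le_of_ne (hx.trans hIcc.1) (Ne.symm ht1), lt_of_le_of_ne (hIcc.2.trans hy) ht2⟩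
  exact phi_one_le hγ this

lemma lower_int (hγ : 1 < γ) {x y : ℝ} (hx : -1 ≤ x) (hxy : x ≤ y) (hy : y ≤ 1) :
    y - x ≤ ∫ t in x..y, phiF γ t := by
  have h1 : (∫ t in x..y, (1:ℝ)) ≤ ∫ t in x..y, phiF γ t := by
    apply intervalIntegral.integral_mono_ae_restrict hxy intervalIntegrable_const
      (phi_intble hγ ⟨hx, hxy.trans hy⟩ ⟨hx.trans hxy, hy⟩)
    exact ae_phi_ge hγ hx hy
  simpa using h1

lemma rpow_sub_le {u v q : ℝ} (hu : 0 ≤ u) (huv : u ≤ v) (hq0 : 0 ≤ q) (hq1 : q ≤ 1) :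
    v ^ q - u ^ q ≤ (v - u) ^ q := by
  have key := NNReal.rpow_add_le_add_rpow (⟨u, hu⟩ : NNReal) (⟨v - u, sub_nonneg.2 huv⟩ : NNReal) hq0 hq1
  have h3 := NNReal.coe_le_coe.2 key
  have h4 : (u + (v - u)) ^ q ≤ u ^ q + (v - u) ^ q := by
    exact h3
  have h5 : u + (v - u) = v := by ring
  rw [h5] at h4
  linarith

lemma int_psi1 (hγ : 1 < γ) {x y : ℝ} (hxy : x ≤ y) (hy : y ≤ 1) :
    (∫ t in x..y, (1 - t) ^ (-((γ - 1) / γ))) ≤ (y - x) ^ (1 / γ) / (1 / γ) := by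
  have h1 : (∫ t in x..y, (fun s : ℝ => s ^ (-((γ - 1) / γ))) (1 - t))
      = ∫ s in (1 - y)..(1 - x), s ^ (-((γ - 1) / γ)) :=
    intervalIntegral.integral_comp_sub_left (fun s : ℝ => s ^ (-((γ - 1) / γ))) 1
  have h2 : (∫ s in (1 - y)..(1 - x), s ^ (-((γ - 1) / γ)))
      = ((1 - x) ^ (-((γ - 1) / γ) + 1) - (1 - y) ^ (-((γ - 1) / γ) + 1)) / (-((γ - 1) / γ) + 1) :=
    integral_rpow (Or.inl (neg_p_gt hγ))
  rw [show (∫ t in x..y, (1 - t) ^ (-((γ - 1) / γ)))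
      = ∫ t in x..y, (fun s : ℝ => s ^ (-((γ - 1) / γ))) (1 - t) from rfl, h1, h2, q_eq hγ]
  have hb : (1 - x) ^ (1 / γ) - (1 - y) ^ (1 / γ) ≤ (y - x) ^ (1 / γ) := by
    have := rpow_sub_le (u := 1 - y) (v := 1 - x) (q := 1 / γ)
      (by linarith) (by linarith) (q_pos hγ).le (q_le_one hγ)
    simpa [show (1 - x) - (1 - y) = y - x by ring] using this
  have hmul := mul_le_mul_of_nonneg_right hb (le_of_lt (inv_pos.2 (q_pos hγ)))
  simpa [div_eq_mul_inv] using hmul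

lemma int_psi2 (hγ : 1 < γ) {x y : ℝ} (hx : -1 ≤ x) (hxy : x ≤ y) :
    (∫ t in x..y, (1 + t) ^ (-((γ - 1) / γ))) ≤ (y - x) ^ (1 / γ) / (1 / γ) := by
  have h1 : (∫ t in x..y, (fun s : ℝ => s ^ (-((γ - 1) / γ))) (1 + t))
      = ∫ s in (1 + x)..(1 + y), s ^ (-((γ - 1) / γ)) := by
    have := intervalIntegral.integral_comp_add_left (a := x) (b := y)
      (f := fun s : ℝ => s ^ (-((γ - 1) / γ))) 1
    simpa [add_comm] using this
  have h2 : (∫ s in (1 + x)..(1 + y), s ^ (-((γ - 1) / γ)))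
      = ((1 + y) ^ (-((γ - 1) / γ) + 1) - (1 + x) ^ (-((γ - 1) / γ) + 1)) / (-((γ - 1) / γ) + 1) :=
    integral_rpow (Or.inl (neg_p_gt hγ))
  rw [show (∫ t in x..y, (1 + t) ^ (-((γ - 1) / γ)))
      = ∫ t in x..y, (fun s : ℝ => s ^ (-((γ - 1) / γ))) (1 + t) from rfl, h1, h2, q_eq hγ]
  have hb : (1 + y) ^ (1 / γ) - (1 + x) ^ (1 / γ) ≤ (y - x) ^ (1 / γ) := by
    have := rpow_sub_le (u := 1 + x) (v := 1 + y) (q := 1 / γ)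
      (by linarith) (by linarith) (q_pos hγ).le (q_le_one hγ)
    simpa [show (1 + y) - (1 + x) = y - x by ring] using this
  have hmul := mul_le_mul_of_nonneg_right hb (le_of_lt (inv_pos.2 (q_pos hγ)))
  simpa [div_eq_mul_inv] using hmul

lemma ae_phi_le_psi (hγ : 1 < γ) {x y : ℝ} (hx : -1 ≤ x) (hy : y ≤ 1) :
    ∀ᵐ t ∂(volume.restrict (Icc x y)), phiF γ t ≤ psiF γ t := by
  have h2 : ∀ᵐ t ∂(volume.restrict (Icc x y)), t ∈ Icc x y :=
    ae_restrict_mem measurableSet_Icc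
  filter_upwards [h2] with t hIcc
  exact phi_le_psi hγ ⟨hx.trans hIcc.1, hIcc.2.trans hy⟩

lemma upper_int (hγ : 1 < γ) {x y : ℝ} (hx : -1 ≤ x) (hxy : x ≤ y) (hy : y ≤ 1) :
    (∫ t in x..y, phiF γ t) ≤ (2 / (1 / γ)) * (y - x) ^ (1 / γ) := by
  have hxI : x ∈ Icc (-1:ℝ) 1 := ⟨hx, hxy.trans hy⟩
  have hyI : y ∈ Icc (-1:ℝ) 1 := ⟨hx.trans hxy, hy⟩
  have step1 : (∫ t in x..y, phiF γ t) ≤ ∫ t in x..y, psiF γ t :=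
    intervalIntegral.integral_mono_ae_restrict hxy (phi_intble hγ hxI hyI)
      (psi_intble hγ x y) (ae_phi_le_psi hγ hx hy)
  have step2 : (∫ t in x..y, psiF γ t)
      = (∫ t in x..y, (1 - t) ^ (-((γ - 1) / γ))) + ∫ t in x..y, (1 + t) ^ (-((γ - 1) / γ)) := by
    unfold psiF
    exact intervalIntegral.integral_add (psi_intble1 hγ x y) (psi_intble2 hγ x y)
  have step3 := int_psi1 hγ hxy hy
  have step4 := int_psi2 hγ hx hxy
  have : (∫ t in x..y, phiF γ t) ≤ 2 * ((y - x) ^ (1 / γ) / (1 / γ)) := by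
    rw [step2] at step1
    linarith
  calc (∫ t in x..y, phiF γ t) ≤ 2 * ((y - x) ^ (1 / γ) / (1 / γ)) := this
    _ = (2 / (1 / γ)) * (y - x) ^ (1 / γ) := by ring

/-! ### Properties of `hgam` -/

lemma II_ge_two (hγ : 1 < γ) : 2 ≤ ∫ t in (-1:ℝ)..1, phiF γ t := by
  have := lower_int hγ (x := -1) (y := 1) (le_refl _) (by norm_num) (le_refl _)
  linarith

lemma II_pos (hγ : 1 < γ) : 0 < ∫ t in (-1:ℝ)..1, phiF γ t := by
  linarith [II_ge_two hγ]

lemma c_pos (hγ : 1 < γ) : 0 < 2 / ∫ t in (-1:ℝ)..1, phiF γ t :=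
  div_pos (by norm_num) (II_pos hγ)

lemma hgam_sub (hγ : 1 < γ) {x y : ℝ} (hx : -1 ≤ x) (hxy : x ≤ y) (hy : y ≤ 1) :
    hgam γ y - hgam γ x = (2 / ∫ t in (-1:ℝ)..1, phiF γ t) * ∫ t in x..y, phiF γ t := by
  have hadd : (∫ t in (-1:ℝ)..x, phiF γ t) + (∫ t in x..y, phiF γ t)
      = ∫ t in (-1:ℝ)..y, phiF γ t :=
    intervalIntegral.integral_add_adjacent_intervals
      (phi_intble hγ (by norm_num) ⟨hx, hxy.trans hy⟩)
      (phi_intble hγ ⟨hx, hxy.trans hy⟩ ⟨hx.trans hxy, hy⟩)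
  rw [hgam_eq, hgam_eq, ← hadd]
  ring

lemma hgam_lower (hγ : 1 < γ) {x y : ℝ} (hx : -1 ≤ x) (hxy : x ≤ y) (hy : y ≤ 1) :
    (2 / ∫ t in (-1:ℝ)..1, phiF γ t) * (y - x) ≤ hgam γ y - hgam γ x := by
  rw [hgam_sub hγ hx hxy hy]
  exact mul_le_mul_of_nonneg_left (lower_int hγ hx hxy hy) (c_pos hγ).le

lemma hgam_upper (hγ : 1 < γ) {x y : ℝ} (hx : -1 ≤ x) (hxy : x ≤ y) (hy : y ≤ 1) :
    hgam γ y - hgam γ x ≤ ((2 / ∫ t in (-1:ℝ)..1, phiF γ t) * (2 / (1 / γ))) * (y - x) ^ (1 / γ) := by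
  rw [hgam_sub hγ hx hxy hy, mul_assoc]
  exact mul_le_mul_of_nonneg_left (upper_int hγ hx hxy hy) (c_pos hγ).le

lemma hgam_strictMono (hγ : 1 < γ) : StrictMonoOn (hgam γ) (Icc (-1) 1) := by
  intro x hx y hy hxy
  have := hgam_lower hγ hx.1 hxy.le hy.2
  have hc := c_pos hγ
  nlinarith

lemma hgam_neg_one (γ : ℝ) : hgam γ (-1) = -1 := by
  rw [hgam_eq, intervalIntegral.integral_same]
  ring

lemma hgam_one (hγ : 1 < γ) : hgam γ 1 = 1 := by
  rw [hgam_eq]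
  field_simp [ne_of_gt (II_pos hγ)]
  ring

lemma hgam_zero (hγ : 1 < γ) : hgam γ 0 = 0 := by
  have heven : (∫ t in (0:ℝ)..1, phiF γ t) = ∫ t in (-1:ℝ)..0, phiF γ t := by
    have h1 : (∫ t in (0:ℝ)..1, phiF γ (-t)) = ∫ t in (-1:ℝ)..0, phiF γ t := by
      simpa using intervalIntegral.integral_comp_neg (a := (0:ℝ)) (b := 1) (fun t => phiF γ t)
    rw [← h1]
    congr 1
    ext t
    simp [phiF, neg_sq]
  have hadd : (∫ t in (-1:ℝ)..0, phiF γ t) + (∫ t in (0:ℝ)..1, phiF γ t)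
      = ∫ t in (-1:ℝ)..1, phiF γ t :=
    intervalIntegral.integral_add_adjacent_intervals
      (phi_intble hγ (by norm_num) (by norm_num))
      (phi_intble hγ (by norm_num) (by norm_num))
  have hS : (∫ t in (-1:ℝ)..1, phiF γ t) = 2 * ∫ t in (-1:ℝ)..0, phiF γ t := by
    rw [← hadd, heven]; ring
  have hS0 : (∫ t in (-1:ℝ)..0, phiF γ t) ≠ 0 := by
    have := II_pos hγ
    rw [hS] at this
    intro h; rw [h] at this; norm_num at this
  rw [hgam_eq, hS]
  field_simp
  ring

lemma hgam_mem (hγ : 1 < γ) {x : ℝ} (hx : x ∈ Icc (-1:ℝ) 1) : hgam γ x ∈ Icc (-1:ℝ) 1 := by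
  constructor
  · rcases eq_or_lt_of_le hx.1 with h | h
    · rw [← h, hgam_neg_one]
    · rw [← hgam_neg_one γ]
      exact ((hgam_strictMono hγ) (by norm_num) hx h).le
  · rcases eq_or_lt_of_le hx.2 with h | h
    · rw [h, hgam_one hγ]
    · rw [← hgam_one hγ]
      exact ((hgam_strictMono hγ) hx (by norm_num) h).le

lemma hgam_holder (hγ : 1 < γ) {x y : ℝ} (hx : x ∈ Icc (-1:ℝ) 1) (hy : y ∈ Icc (-1:ℝ) 1) :
    |hgam γ y - hgam γ x| ≤ ((2 / ∫ t in (-1:ℝ)..1, phiF γ t) * (2 / (1 / γ))) * |y - x| ^ (1 / γ) := by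
  rcases le_total x y with h | h
  · have h1 := hgam_upper hγ hx.1 h hy.2
    have h2 := hgam_lower hγ hx.1 h hy.2
    have hc := c_pos hγ
    rw [abs_of_nonneg (by nlinarith), abs_of_nonneg (by linarith)]
    exact h1
  · have h1 := hgam_upper hγ hy.1 h hx.2
    have h2 := hgam_lower hγ hy.1 h hx.2
    have hc := c_pos hγ
    rw [abs_sub_comm, abs_sub_comm y x, abs_of_nonneg (by nlinarith), abs_of_nonneg (by linarith)]
    exact h1

lemma hgam_contOn (hγ : 1 < γ) : ContinuousOn (hgam γ) (Icc (-1) 1) := by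
  intro x hx
  have hK : (0:ℝ) ≤ (2 / ∫ t in (-1:ℝ)..1, phiF γ t) * (2 / (1 / γ)) := by
    have := c_pos hγ
    have := q_pos hγ
    positivity
  rw [ContinuousWithinAt, ← tendsto_sub_nhds_zero_iff]
  have hbound : Tendsto (fun y => ((2 / ∫ t in (-1:ℝ)..1, phiF γ t) * (2 / (1 / γ))) * |y - x| ^ (1 / γ))
      (nhdsWithin x (Icc (-1) 1)) (nhds 0) := by
    have hcont : ContinuousAt (fun y : ℝ => ((2 / ∫ t in (-1:ℝ)..1, phiF γ t) * (2 / (1 / γ))) * |y - x| ^ (1 / γ)) x := by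
      apply ContinuousAt.mul continuousAt_const
      apply Real.continuousAt_rpow_const _ _ (Or.inr (q_pos hγ).le) |>.comp
      exact (continuous_abs.comp (continuous_id.sub continuous_const)).continuousAt
    have h0 : ((2 / ∫ t in (-1:ℝ)..1, phiF γ t) * (2 / (1 / γ))) * |x - x| ^ (1 / γ) = 0 := by
      rw [sub_self, abs_zero, Real.zero_rpow (ne_of_gt (q_pos hγ)), mul_zero]
    have := hcont.continuousWithinAt (s := Icc (-1) 1)
    rw [ContinuousWithinAt, h0] at this
    exact this
  apply squeeze_zero_norm' _ hbound
  filter_upwards [self_mem_nhdsWithin] with y hy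
  exact hgam_holder hγ hx hy

lemma hgam_surj (hγ : 1 < γ) : Icc (-1:ℝ) 1 ⊆ hgam γ '' Icc (-1) 1 := by
  have := intermediate_value_Icc (by norm_num : (-1:ℝ) ≤ 1) (hgam_contOn hγ)
  rw [hgam_neg_one, hgam_one hγ] at this
  exact this

lemma hgamInv_mem (hγ : 1 < γ) {y : ℝ} (hy : y ∈ Icc (-1:ℝ) 1) :
    hgamInv γ y ∈ Icc (-1:ℝ) 1 := by
  obtain ⟨x, hx, hxy⟩ := hgam_surj hγ hy
  exact Function.invFunOn_mem ⟨x, hx, hxy⟩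

lemma hgam_hgamInv (hγ : 1 < γ) {y : ℝ} (hy : y ∈ Icc (-1:ℝ) 1) :
    hgam γ (hgamInv γ y) = y := by
  obtain ⟨x, hx, hxy⟩ := hgam_surj hγ hy
  exact Function.invFunOn_eq ⟨x, hx, hxy⟩

lemma hgamInv_hgam (hγ : 1 < γ) {x : ℝ} (hx : x ∈ Icc (-1:ℝ) 1) :
    hgamInv γ (hgam γ x) = x := by
  have h1 : hgamInv γ (hgam γ x) ∈ Icc (-1:ℝ) 1 := Function.invFunOn_mem ⟨x, hx, rfl⟩
  have h2 : hgam γ (hgamInv γ (hgam γ x)) = hgam γ x := Function.invFunOn_eq ⟨x, hx, rfl⟩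
  exact (hgam_strictMono hγ).injOn h1 hx h2

lemma hgam_image (hγ : 1 < γ) {a b : ℝ} (ha : -1 ≤ a) (hab : a ≤ b) (hb : b ≤ 1) :
    hgam γ '' Icc a b = Icc (hgam γ a) (hgam γ b) := by
  have haI : a ∈ Icc (-1:ℝ) 1 := ⟨ha, hab.trans hb⟩
  have hbI : b ∈ Icc (-1:ℝ) 1 := ⟨ha.trans hab, hb⟩
  apply Set.Subset.antisymm
  · rintro z ⟨y, hy, rfl⟩
    have hyI : y ∈ Icc (-1:ℝ) 1 := ⟨ha.trans hy.1, hy.2.trans hb⟩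
    exact ⟨(hgam_strictMono hγ).monotoneOn haI hyI hy.1,
      (hgam_strictMono hγ).monotoneOn hyI hbI hy.2⟩
  · intro z hz
    have hzI : z ∈ Icc (-1:ℝ) 1 :=
      ⟨(hgam_mem hγ haI).1.trans hz.1, hz.2.trans (hgam_mem hγ hbI).2⟩
    set x := hgamInv γ z with hxdef
    have hxI : x ∈ Icc (-1:ℝ) 1 := hgamInv_mem hγ hzI
    have hgx : hgam γ x = z := hgam_hgamInv hγ hzI
    refine ⟨x, ⟨?_, ?_⟩, hgx⟩
    · by_contra hc
      push_neg at hc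
      have := hgam_strictMono hγ hxI haI hc
      rw [hgx] at this
      exact absurd hz.1 (not_le.2 this)
    · by_contra hc
      push_neg at hc
      have := hgam_strictMono hγ hbI hxI hc
      rw [hgx] at this
      exact absurd hz.2 (not_le.2 this)

lemma len_Icc {a b : ℝ} (h : a ≤ b) : len (Icc a b) = b - a := by
  rw [len, Real.volume_Icc, ENNReal.toReal_ofReal (sub_nonneg.2 h)]

variable {f : ℝ → ℝ}

lemma std_tildeF (hγ : 1 < γ) (hf : Std f) (hmaps : MapsTo f (Icc (-1) 1) (Icc (-1) 1)) :
    Std (tildeF γ f) := by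
  have hIsub0 : Icc (-1:ℝ) 0 ⊆ Icc (-1:ℝ) 1 := Icc_subset_Icc (le_refl _) (by norm_num)
  have hIsub1 : Icc (0:ℝ) 1 ⊆ Icc (-1:ℝ) 1 := Icc_subset_Icc (by norm_num) (le_refl _)
  have hInv0 : ∀ {x : ℝ}, x ∈ Icc (-1:ℝ) 0 → hgamInv γ x ∈ Icc (-1:ℝ) 0 := by
    intro x hx
    have hxI : x ∈ Icc (-1:ℝ) 1 := hIsub0 hx
    have h1 : hgamInv γ x ∈ Icc (-1:ℝ) 1 := hgamInv_mem hγ hxI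
    refine ⟨h1.1, ?_⟩
    by_contra hc
    push_neg at hc
    have := hgam_strictMono hγ (by norm_num : (0:ℝ) ∈ Icc (-1:ℝ) 1) h1 hc
    rw [hgam_zero hγ, hgam_hgamInv hγ hxI] at this
    exact absurd hx.2 (not_le.2 this)
  have hInv1 : ∀ {x : ℝ}, x ∈ Icc (0:ℝ) 1 → hgamInv γ x ∈ Icc (0:ℝ) 1 := by
    intro x hx
    have hxI : x ∈ Icc (-1:ℝ) 1 := hIsub1 hx
    have h1 : hgamInv γ x ∈ Icc (-1:ℝ) 1 := hgamInv_mem hγ hxI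
    refine ⟨?_, h1.2⟩
    by_contra hc
    push_neg at hc
    have := hgam_strictMono hγ h1 (by norm_num : (0:ℝ) ∈ Icc (-1:ℝ) 1) hc
    rw [hgam_zero hγ, hgam_hgamInv hγ hxI] at this
    exact absurd hx.1 (not_le.2 this)
  have hInvlt : ∀ {x y : ℝ}, x ∈ Icc (-1:ℝ) 1 → y ∈ Icc (-1:ℝ) 1 → x < y →
      hgamInv γ x < hgamInv γ y := by
    intro x y hx hy hxy
    by_contra hc
    push_neg at hc
    have := (hgam_strictMono hγ).monotoneOn (hgamInv_mem hγ hy) (hgamInv_mem hγ hx) hc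
    rw [hgam_hgamInv hγ hx, hgam_hgamInv hγ hy] at this
    exact absurd hxy (not_lt.2 this)
  refine ⟨?_, ?_, ?_, ?_⟩
  · intro x hx y hy hxy
    have ha := hInv0 hx
    have hb := hInv0 hy
    have h2 : f (hgamInv γ x) < f (hgamInv γ y) :=
      hf.mono ha hb (hInvlt (hIsub0 hx) (hIsub0 hy) hxy)
    exact hgam_strictMono hγ (hmaps (hIsub0 ha)) (hmaps (hIsub0 hb)) h2
  · intro x hx y hy hxy
    have ha := hInv1 hx
    have hb := hInv1 hy
    have h2 : f (hgamInv γ y) < f (hgamInv γ x) :=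
      hf.anti ha hb (hInvlt (hIsub1 hx) (hIsub1 hy) hxy)
    exact hgam_strictMono hγ (hmaps (hIsub1 hb)) (hmaps (hIsub1 ha)) h2
  · intro y hy
    obtain ⟨x, hx, hfx⟩ := hf.surj0 (hgamInv γ y) (hgamInv_mem hγ hy)
    refine ⟨hgam γ x, ⟨?_, ?_⟩, ?_⟩
    · rw [← hgam_neg_one γ]
      exact (hgam_strictMono hγ).monotoneOn (by norm_num) (hIsub0 hx) hx.1
    · rw [← hgam_zero hγ]
      exact (hgam_strictMono hγ).monotoneOn (hIsub0 hx) (by norm_num) hx.2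
    · show hgam γ (f (hgamInv γ (hgam γ x))) = y
      rw [hgamInv_hgam hγ (hIsub0 hx), hfx, hgam_hgamInv hγ hy]
  · intro y hy
    obtain ⟨x, hx, hfx⟩ := hf.surj1 (hgamInv γ y) (hgamInv_mem hγ hy)
    refine ⟨hgam γ x, ⟨?_, ?_⟩, ?_⟩
    · rw [← hgam_zero hγ]
      exact (hgam_strictMono hγ).monotoneOn (by norm_num) (hIsub1 hx) hx.1
    · rw [← hgam_one hγ]
      exact (hgam_strictMono hγ).monotoneOn (hIsub1 hx) (by norm_num) hx.2
    · show hgam γ (f (hgamInv γ (hgam γ x))) = y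
      rw [hgamInv_hgam hγ (hIsub1 hx), hfx, hgam_hgamInv hγ hy]

lemma branch_conj (hγ : 1 < γ) (hf : Std f) (hmaps : MapsTo f (Icc (-1) 1) (Icc (-1) 1))
    (i : Bool) {y : ℝ} (hy : y ∈ Icc (-1:ℝ) 1) :
    branch (tildeF γ f) i (hgam γ y) = hgam γ (branch f i y) := by
  have htd := std_tildeF hγ hf hmaps
  cases i with
  | false =>
    have hx := hf.b0_mem hy
    have hxI : branch f false y ∈ Icc (-1:ℝ) 1 := ⟨hx.1, hx.2.trans (by norm_num)⟩
    have hmem : hgam γ (branch f false y) ∈ Icc (-1:ℝ) 0 := by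
      refine ⟨?_, ?_⟩
      · rw [← hgam_neg_one γ]
        exact (hgam_strictMono hγ).monotoneOn (by norm_num) hxI hx.1
      · rw [← hgam_zero hγ]
        exact (hgam_strictMono hγ).monotoneOn hxI (by norm_num) hx.2
    apply htd.b0_unique hmem
    show hgam γ (f (hgamInv γ (hgam γ (branch f false y)))) = hgam γ y
    rw [hgamInv_hgam hγ hxI, hf.b0_eq hy]
  | true =>
    have hx := hf.b1_mem hy
    have hxI : branch f true y ∈ Icc (-1:ℝ) 1 := ⟨le_trans (by norm_num) hx.1, hx.2⟩
    have hmem : hgam γ (branch f true y) ∈ Icc (0:ℝ) 1 := by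
      refine ⟨?_, ?_⟩
      · rw [← hgam_zero hγ]
        exact (hgam_strictMono hγ).monotoneOn (by norm_num) hxI hx.1
      · rw [← hgam_one hγ]
        exact (hgam_strictMono hγ).monotoneOn hxI (by norm_num) hx.2
    apply htd.b1_unique hmem
    show hgam γ (f (hgamInv γ (hgam γ (branch f true y)))) = hgam γ y
    rw [hgamInv_hgam hγ hxI, hf.b1_eq hy]

lemma Iw_conj (hγ : 1 < γ) (hf : Std f) (hmaps : MapsTo f (Icc (-1) 1) (Icc (-1) 1))
    (w : List Bool) : Iw (tildeF γ f) w = hgam γ '' Iw f w := by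
  induction w with
  | nil =>
    show gw (tildeF γ f) [] '' Icc (-1) 1 = hgam γ '' (gw f [] '' Icc (-1) 1)
    simp only [gw, id_eq, Set.image_id']
    rw [hgam_image hγ (le_refl _) (by norm_num) (le_refl _), hgam_neg_one, hgam_one hγ]
  | cons i w ih =>
    obtain ⟨a, b, ha, hab, hb, hI⟩ := hf.Iw_eq_Icc w
    rw [Iw_cons, Iw_cons, ih, hI, Set.image_image, Set.image_image]
    apply Set.image_congr
    intro y hy
    exact branch_conj hγ hf hmaps i ⟨ha.trans hy.1, hy.2.trans hb⟩

end PF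


/-- Lemma 3: for a C¹ self-map `f` of `[-1,1]` with the standard shape and
power law `|x|^γ` at the critical point, the partitions determined by `f` decrease
exponentially iff the partitions determined by `f̃ = h_γ ∘ f ∘ h_γ⁻¹` decrease
exponentially. -/
theorem partitions_decrease_exponentially_iff (γ : ℝ) (hγ : 1 < γ) (f fd : ℝ → ℝ)
    (hmaps : MapsTo f (Icc (-1) 1) (Icc (-1) 1))
    (hderiv : ∀ x ∈ Icc (-1:ℝ) 1, HasDerivWithinAt f (fd x) (Icc (-1) 1) x)
    (hfd_cont : ContinuousOn fd (Icc (-1) 1))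
    (hmono : StrictMonoOn f (Icc (-1) 0)) (hanti : StrictAntiOn f (Icc 0 1))
    (hf0 : f 0 = 1) (hfm1 : f (-1) = -1) (hf1 : f 1 = -1)
    (hpow_left : ∃ A : ℝ, A ≠ 0 ∧
      Tendsto (fun x => fd x / |x| ^ (γ - 1)) (nhdsWithin 0 (Iio 0)) (nhds A))
    (hpow_right : ∃ B : ℝ, B ≠ 0 ∧
      Tendsto (fun x => fd x / |x| ^ (γ - 1)) (nhdsWithin 0 (Ioi 0)) (nhds B)) :
    (∃ C > (0:ℝ), ∃ lam ∈ Ioo (0:ℝ) 1, ∀ n : ℕ, ∀ w : List Bool,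
      w.length = n + 1 → len (Iw f w) ≤ C * lam ^ n) ↔
    (∃ C > (0:ℝ), ∃ lam ∈ Ioo (0:ℝ) 1, ∀ n : ℕ, ∀ w : List Bool,
      w.length = n + 1 → len (Iw (tildeF γ f) w) ≤ C * lam ^ n) := by
  have hcont : ContinuousOn f (Icc (-1) 1) := fun x hx => (hderiv x hx).continuousWithinAt
  have hf : PF.Std f := by
    refine ⟨hmono, hanti, ?_, ?_⟩
    · intro y hy
      have h := intermediate_value_Icc (by norm_num : (-1:ℝ) ≤ 0)
        (hcont.mono (Icc_subset_Icc (le_refl _) (by norm_num)))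
      rw [hfm1, hf0] at h
      exact h hy
    · intro y hy
      have h := intermediate_value_Icc' (by norm_num : (0:ℝ) ≤ 1)
        (hcont.mono (Icc_subset_Icc (by norm_num) (le_refl _)))
      rw [hf1, hf0] at h
      exact h hy
  set K := (2 / ∫ t in (-1:ℝ)..1, PF.phiF γ t) * (2 / (1 / γ)) with hKdef
  have hKpos : 0 < K := mul_pos (PF.c_pos hγ) (div_pos two_pos (PF.q_pos hγ))
  constructor
  · rintro ⟨C, hC, lam, hlam, hdec⟩
    refine ⟨K * C ^ (1 / γ), mul_pos hKpos (Real.rpow_pos_of_pos hC _), lam ^ (1 / γ),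
      ⟨Real.rpow_pos_of_pos hlam.1 _, Real.rpow_lt_one hlam.1.le hlam.2 (PF.q_pos hγ)⟩, ?_⟩
    intro n w hw
    obtain ⟨a, b, ha, hab, hb, hI⟩ := hf.Iw_eq_Icc w
    have hlen : len (Iw f w) = b - a := by rw [hI]; exact PF.len_Icc hab
    have h1 : b - a ≤ C * lam ^ n := by rw [← hlen]; exact hdec n w hw
    have h2 : len (Iw (tildeF γ f) w) = hgam γ b - hgam γ a := by
      rw [PF.Iw_conj hγ hf hmaps w, hI, PF.hgam_image hγ ha hab hb]
      exact PF.len_Icc ((PF.hgam_strictMono hγ).monotoneOn ⟨ha, hab.trans hb⟩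
        ⟨ha.trans hab, hb⟩ hab)
    have hsplit : (C * lam ^ n) ^ (1 / γ) = C ^ (1 / γ) * (lam ^ (1 / γ)) ^ n := by
      rw [Real.mul_rpow hC.le (pow_nonneg hlam.1.le n), ← Real.rpow_natCast lam n,
        ← Real.rpow_natCast (lam ^ (1 / γ)) n, ← Real.rpow_mul hlam.1.le,
        ← Real.rpow_mul hlam.1.le, mul_comm (n : ℝ) (1 / γ)]
    rw [h2]
    calc hgam γ b - hgam γ a ≤ K * (b - a) ^ (1 / γ) := PF.hgam_upper hγ ha hab hb
      _ ≤ K * (C * lam ^ n) ^ (1 / γ) :=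
          mul_le_mul_of_nonneg_left
            (Real.rpow_le_rpow (by linarith) h1 (PF.q_pos hγ).le) hKpos.le
      _ = K * C ^ (1 / γ) * (lam ^ (1 / γ)) ^ n := by rw [hsplit]; ring
  · rintro ⟨C, hC, lam, hlam, hdec⟩
    have hII := PF.II_pos hγ
    refine ⟨(∫ t in (-1:ℝ)..1, PF.phiF γ t) / 2 * C,
      mul_pos (div_pos hII two_pos) hC, lam, hlam, ?_⟩
    intro n w hw
    obtain ⟨a, b, ha, hab, hb, hI⟩ := hf.Iw_eq_Icc w
    have hlen : len (Iw f w) = b - a := by rw [hI]; exact PF.len_Icc hab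
    have h2 : len (Iw (tildeF γ f) w) = hgam γ b - hgam γ a := by
      rw [PF.Iw_conj hγ hf hmaps w, hI, PF.hgam_image hγ ha hab hb]
      exact PF.len_Icc ((PF.hgam_strictMono hγ).monotoneOn ⟨ha, hab.trans hb⟩
        ⟨ha.trans hab, hb⟩ hab)
    have h3 := PF.hgam_lower hγ ha hab hb
    have h4 : hgam γ b - hgam γ a ≤ C * lam ^ n := by rw [← h2]; exact hdec n w hw
    have h5 : (2 / ∫ t in (-1:ℝ)..1, PF.phiF γ t) * (b - a) ≤ C * lam ^ n := le_trans h3 h4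
    rw [hlen]
    have hIIne : (∫ t in (-1:ℝ)..1, PF.phiF γ t) ≠ 0 := ne_of_gt hII
    calc b - a = (∫ t in (-1:ℝ)..1, PF.phiF γ t) / 2 *
          ((2 / ∫ t in (-1:ℝ)..1, PF.phiF γ t) * (b - a)) := by field_simp
      _ ≤ (∫ t in (-1:ℝ)..1, PF.phiF γ t) / 2 * (C * lam ^ n) :=
          mul_le_mul_of_nonneg_left h5 (by positivity)
      _ = (∫ t in (-1:ℝ)..1, PF.phiF γ t) / 2 * C * lam ^ n := by ring
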